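/- Let p_n = |E_n^r(T_{1;1,2,...,r})| where T_{1;1,...,r} = {(1^(1), 2^(a)) : a = 1,...,r}. Then p_n satisfies the recurrence p_n = n(r−1) p_{n−1} + Σ_{i=1}^n C(n−1, i−1) (n−i)! · 0^{n−i} · p_{i−1} for n ≥ 1, with p_0 = 1, and consequently p_n = Π_{j=1}^n (j(r−1)+1). -/

import Mathlib

open Finset Equiv

/-- A signed permutation of length `n` with `r` signs: a permutation of `Fin n`
together with a sign in `Fin r` attached to each position. -/
abbrev SignedPerm (n r : ℕ) := Equiv.Perm (Fin n) × (Fin n → Fin r)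

/-- `SPContains p x` : the signed permutation `x` contains the signed pattern `p`,
i.e. there is an increasing sequence of positions on which the symbols of `x` are
order-isomorphic to the symbols of `p` and the signs match exactly. -/
def SPContains {k n r : ℕ} (p : SignedPerm k r) (x : SignedPerm n r) : Prop :=
  ∃ f : Fin k → Fin n, StrictMono f ∧
    (∀ i j : Fin k, p.1 i < p.1 j ↔ x.1 (f i) < x.1 (f j)) ∧
    (∀ i : Fin k, x.2 (f i) = p.2 i)

/-- Classical (unsigned) pattern containment for permutations. -/
def PContains {k m : ℕ} (τ : Equiv.Perm (Fin k)) (σ : Equiv.Perm (Fin m)) : Prop :=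
  ∃ f : Fin k → Fin m, StrictMono f ∧ ∀ i j : Fin k, τ i < τ j ↔ σ (f i) < σ (f j)

/-- The simple form of avoidance. -/
def SPAvoids {n r : ℕ} (x : SignedPerm n r) : Prop :=
  ∀ i j : Fin n, i < j → (x.2 i : ℕ) = 0 → x.1 j < x.1 i

lemma avoid_iff {n r : ℕ} (hr : 0 < r) (x : SignedPerm n r) :
    (∀ v : Fin 2 → Fin r, v 0 = ⟨0, hr⟩ →
        ¬ SPContains ((1 : Equiv.Perm (Fin 2)), v) x) ↔ SPAvoids x := by
  constructor
  · intro h i j hij h0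
    by_contra hlt
    push_neg at hlt
    have hne : x.1 i ≠ x.1 j := fun he => (hij.ne (x.1.injective he))
    have hlt' : x.1 i < x.1 j := lt_of_le_of_ne hlt hne
    refine h ![⟨0, hr⟩, x.2 j] rfl ⟨![i, j], ?_, ?_, ?_⟩
    · intro a b hab
      fin_cases a <;> fin_cases b
      · exact absurd hab (by decide)
      · exact hij
      · exact absurd hab (by decide)
      · exact absurd hab (by decide)
    · intro a b
      fin_cases a <;> fin_cases b
      · exact iff_of_false (show ¬ (0 : Fin 2) < 0 by decide) (lt_irrefl _)
      · exact iff_of_true (show (0 : Fin 2) < 1 by decide) hlt'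
      · exact iff_of_false (show ¬ (1 : Fin 2) < 0 by decide) hlt'.asymm
      · exact iff_of_false (show ¬ (1 : Fin 2) < 1 by decide) (lt_irrefl _)
    · intro a
      fin_cases a
      · exact Fin.ext h0
      · rfl
  · rintro h v hv ⟨f, hf, hord, hsg⟩
    have hfs : f 0 < f 1 := hf (by decide)
    have h01 : ((1 : Equiv.Perm (Fin 2)), v).1 0 < ((1 : Equiv.Perm (Fin 2)), v).1 1 := by
      show (0 : Fin 2) < 1
      decide
    have hmono : x.1 (f 0) < x.1 (f 1) := (hord 0 1).mp h01
    have h0 : (x.2 (f 0) : ℕ) = 0 := by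
      rw [hsg 0]
      show (v 0 : ℕ) = 0
      rw [hv]
    exact absurd (h _ _ hfs h0) hmono.asymm

section Equivs

variable {n r : ℕ}

/-- Insert the value 0 at position `q`. -/
def ins (q : Fin (n + 1)) (e : Equiv.Perm (Fin n)) : Equiv.Perm (Fin (n + 1)) :=
  ((finSuccEquiv' q).trans e.optionCongr).trans (finSuccEquiv' 0).symm

lemma ins_at (q : Fin (n + 1)) (e : Equiv.Perm (Fin n)) : ins q e q = 0 := by
  simp [ins, finSuccEquiv'_at, finSuccEquiv'_symm_none]

lemma ins_succAbove (q : Fin (n + 1)) (e : Equiv.Perm (Fin n)) (i : Fin n) :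
    ins q e (q.succAbove i) = (e i).succ := by
  simp [ins, finSuccEquiv'_succAbove, finSuccEquiv'_symm_some, Fin.zero_succAbove]

lemma ins_symm_zero (q : Fin (n + 1)) (e : Equiv.Perm (Fin n)) :
    (ins q e).symm 0 = q := by
  rw [Equiv.symm_apply_eq, ins_at]

/-- Delete the value 0 (at position `σ.symm 0`). -/
def del (σ : Equiv.Perm (Fin (n + 1))) : Equiv.Perm (Fin n) :=
  Equiv.removeNone (((finSuccEquiv' (σ.symm 0)).symm.trans σ).trans (finSuccEquiv' 0))

lemma del_spec (σ : Equiv.Perm (Fin (n + 1))) (i : Fin n) :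
    σ ((σ.symm 0).succAbove i) = (del σ i).succ := by
  set q := σ.symm 0 with hq
  have hx : σ (q.succAbove i) ≠ 0 := by
    intro h
    have : q.succAbove i = q := by
      have := congrArg σ.symm h
      simpa [hq] using this
    exact Fin.succAbove_ne q i this
  obtain ⟨j, hj⟩ := Fin.exists_succAbove_eq hx
  have hE : (((finSuccEquiv' q).symm.trans σ).trans (finSuccEquiv' 0)) (some i) = some j := by
    simp only [Equiv.trans_apply, finSuccEquiv'_symm_some]
    rw [← hj, finSuccEquiv'_succAbove]
  have := Equiv.removeNone_some _ ⟨j, hE⟩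
  rw [hE] at this
  rw [del, ← hq]
  cases this
  rw [← hj, Fin.zero_succAbove]

lemma del_ins (q : Fin (n + 1)) (e : Equiv.Perm (Fin n)) : del (ins q e) = e := by
  have h0 : (ins q e).symm 0 = q := ins_symm_zero q e
  have : (((finSuccEquiv' ((ins q e).symm 0)).symm.trans (ins q e)).trans (finSuccEquiv' 0))
      = e.optionCongr := by
    rw [h0]
    ext x
    simp [ins]
  rw [del, this, Equiv.removeNone_optionCongr]

lemma ins_del (σ : Equiv.Perm (Fin (n + 1))) : ins (σ.symm 0) (del σ) = σ := by
  ext x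
  rcases eq_or_ne x (σ.symm 0) with rfl | hx
  · rw [ins_at, Equiv.apply_symm_apply]
  · obtain ⟨i, rfl⟩ := Fin.exists_succAbove_eq hx
    rw [ins_succAbove, del_spec]

lemma min_pos_last {x : SignedPerm (n + 1) r} (h : SPAvoids x)
    (h0 : (x.2 (x.1.symm 0) : ℕ) = 0) : x.1.symm 0 = Fin.last n := by
  by_contra hne
  have hlt : x.1.symm 0 < Fin.last n := lt_of_le_of_ne (Fin.le_last _) hne
  have := h _ _ hlt h0
  rw [Equiv.apply_symm_apply] at this
  exact Fin.not_lt_zero _ this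

/-- The key structural bijection. -/
def stepEquiv (hr : 0 < r) :
    {x : SignedPerm (n + 1) r // SPAvoids x} ≃
      (Option (Fin (n + 1) × {s : Fin r // (s : ℕ) ≠ 0})) × {x : SignedPerm n r // SPAvoids x} where
  toFun x :=
    ⟨if h0 : (x.1.2 (x.1.1.symm 0) : ℕ) = 0 then none
      else some (x.1.1.symm 0, ⟨x.1.2 (x.1.1.symm 0), h0⟩),
     ⟨(del x.1.1, fun i => x.1.2 ((x.1.1.symm 0).succAbove i)), by
        rintro i j hij h0
        have := x.2 _ _ (Fin.succAbove_lt_succAbove_iff.mpr hij) h0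
        rw [del_spec, del_spec] at this
        exact Fin.succ_lt_succ_iff.mp this⟩⟩
  invFun := fun y =>
    match y with
    | (o, ⟨(e, g'), h'⟩) =>
      ⟨(ins (o.elim (Fin.last n) Prod.fst) e,
        fun z => ((finSuccEquiv' (o.elim (Fin.last n) Prod.fst)) z).elim
          (o.elim ⟨0, hr⟩ (fun w => w.2.1)) g'), by
        rintro i j hij h0
        rcases o with _ | ⟨q₀, s₀⟩ <;> simp only [Option.elim] at hij h0 ⊢
        · rcases eq_or_ne i (Fin.last n) with rfl | hi
          · exact absurd hij (Fin.le_last j : j ≤ Fin.last n).not_gt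
          · obtain ⟨a, rfl⟩ := Fin.exists_succAbove_eq hi
            rw [finSuccEquiv'_succAbove] at h0
            simp only [Option.elim] at h0
            rcases eq_or_ne j (Fin.last n) with rfl | hj
            · rw [ins_at, ins_succAbove]
              exact Fin.succ_pos _
            · obtain ⟨b, rfl⟩ := Fin.exists_succAbove_eq hj
              rw [ins_succAbove, ins_succAbove]
              exact Fin.succ_lt_succ_iff.mpr
                (h' _ _ (Fin.succAbove_lt_succAbove_iff.mp hij) h0)
        · rcases eq_or_ne i q₀ with rfl | hi
          · rw [finSuccEquiv'_at] at h0
            exact absurd h0 s₀.2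
          · obtain ⟨a, rfl⟩ := Fin.exists_succAbove_eq hi
            rw [finSuccEquiv'_succAbove] at h0
            simp only [Option.elim] at h0
            rcases eq_or_ne j q₀ with rfl | hj
            · rw [ins_at, ins_succAbove]
              exact Fin.succ_pos _
            · obtain ⟨b, rfl⟩ := Fin.exists_succAbove_eq hj
              rw [ins_succAbove, ins_succAbove]
              exact Fin.succ_lt_succ_iff.mpr
                (h' _ _ (Fin.succAbove_lt_succAbove_iff.mp hij) h0)⟩
  left_inv := by
    rintro ⟨⟨σ, g⟩, h⟩
    by_cases h0 : (g (σ.symm 0) : ℕ) = 0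
    · have hql : σ.symm 0 = Fin.last n := min_pos_last h h0
      simp only [dif_pos h0, Option.elim]
      apply Subtype.ext
      apply Prod.ext
      · show ins (Fin.last n) (del σ) = σ
        rw [← hql]
        exact ins_del σ
      · funext z
        show ((finSuccEquiv' (Fin.last n)) z).elim ⟨0, hr⟩ _ = g z
        rw [← hql]
        rcases eq_or_ne z (σ.symm 0) with rfl | hz
        · rw [finSuccEquiv'_at]
          exact Fin.ext h0.symm
        · obtain ⟨i, rfl⟩ := Fin.exists_succAbove_eq hz
          rw [finSuccEquiv'_succAbove]
          rfl
    · simp only [dif_neg h0, Option.elim]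
      apply Subtype.ext
      apply Prod.ext
      · show ins (σ.symm 0) (del σ) = σ
        exact ins_del σ
      · funext z
        show ((finSuccEquiv' (σ.symm 0)) z).elim (g (σ.symm 0)) _ = g z
        rcases eq_or_ne z (σ.symm 0) with rfl | hz
        · rw [finSuccEquiv'_at]
          rfl
        · obtain ⟨i, rfl⟩ := Fin.exists_succAbove_eq hz
          rw [finSuccEquiv'_succAbove]
          rfl
  right_inv := by
    rintro ⟨o, ⟨⟨e, g'⟩, h'⟩⟩
    rcases o with _ | ⟨q₀, s₀⟩ <;> simp only [Option.elim]
    · have hs : (ins (Fin.last n) e).symm 0 = Fin.last n := ins_symm_zero _ _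
      apply Prod.ext
      · show (if _ : _ then none else _) = none
        exact dif_pos (by rw [hs, finSuccEquiv'_at])
      · apply Subtype.ext
        apply Prod.ext
        · show del (ins (Fin.last n) e) = e
          rw [hs] at *
          exact del_ins _ _
        · funext i
          show ((finSuccEquiv' (Fin.last n)) (((ins (Fin.last n) e).symm 0).succAbove i)).elim
              ⟨0, hr⟩ g' = g' i
          rw [hs, finSuccEquiv'_succAbove]
          rfl
    · have hs : (ins q₀ e).symm 0 = q₀ := ins_symm_zero _ _
      apply Prod.ext
      · show (if _ : _ then none else _) = some (q₀, s₀)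
        refine (dif_neg ?_).trans ?_
        · rw [hs, finSuccEquiv'_at]
          exact s₀.2
        · simp only [hs, finSuccEquiv'_at, Option.elim]
      · apply Subtype.ext
        apply Prod.ext
        · show del (ins q₀ e) = e
          rw [hs] at *
          exact del_ins _ _
        · funext i
          show ((finSuccEquiv' q₀) (((ins q₀ e).symm 0).succAbove i)).elim _ g' = g' i
          rw [hs, finSuccEquiv'_succAbove]
          rfl

end Equivs

lemma card_signs {r : ℕ} (hr : 0 < r) :
    Nat.card {s : Fin r // (s : ℕ) ≠ 0} = r - 1 := by
  rw [Nat.card_eq_fintype_card]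
  have h1 : Fintype.card {s : Fin r // (s : ℕ) = 0} = 1 := by
    rw [Fintype.card_eq_one_iff]
    exact ⟨⟨⟨0, hr⟩, rfl⟩, by rintro ⟨s, hs⟩; exact Subtype.ext (Fin.ext hs)⟩
  have h2 := Fintype.card_subtype_compl (fun s : Fin r => (s : ℕ) = 0)
  rw [h1, Fintype.card_fin] at h2
  exact h2

lemma card_avoid {r : ℕ} (hr : 0 < r) (n : ℕ) :
    Nat.card {x : SignedPerm n r // SPAvoids x} =
      ∏ j ∈ Finset.Icc 1 n, (j * (r - 1) + 1) := by
  induction n with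
  | zero =>
      rw [show Finset.Icc 1 0 = ∅ from rfl, Finset.prod_empty]
      have htriv : ∀ x : SignedPerm 0 r, SPAvoids x := fun x i => i.elim0
      rw [Nat.card_congr (Equiv.subtypeUnivEquiv htriv), Nat.card_prod]
      simp [Nat.card_eq_fintype_card]
  | succ n ih =>
      rw [Nat.card_congr (stepEquiv hr), Nat.card_prod, Finite.card_option, Nat.card_prod,
        Nat.card_eq_fintype_card (α := Fin (n + 1)), Fintype.card_fin, card_signs hr, ih,
        Finset.prod_Icc_succ_top (Nat.le_add_left 1 n)]
      ring

/-- with `p_n = |E_n^r(T_{1;1,…,r})|` (avoiding all patterns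
`(1^(1),2^(a))`, `a = 1,…,r`), `p` satisfies the stated recurrence and equals
`Π_{j=1}^n (j(r-1)+1)`. -/
theorem recurrence_T_one_all (r : ℕ) (hr : 0 < r) (p : ℕ → ℕ)
    (hp : ∀ n, p n = Nat.card {x : SignedPerm n r //
        ∀ v : Fin 2 → Fin r, v 0 = ⟨0, hr⟩ →
          ¬ SPContains ((1 : Equiv.Perm (Fin 2)), v) x}) :
    p 0 = 1 ∧
    (∀ n, 1 ≤ n → p n = n * (r - 1) * p (n - 1) +
        ∑ i ∈ Finset.Icc 1 n,
          (n - 1).choose (i - 1) * (n - i).factorial * 0 ^ (n - i) * p (i - 1)) ∧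
    (∀ n, p n = ∏ j ∈ Finset.Icc 1 n, (j * (r - 1) + 1)) := by
  have key : ∀ n, p n = ∏ j ∈ Finset.Icc 1 n, (j * (r - 1) + 1) := by
    intro n
    rw [hp n, Nat.card_congr (Equiv.subtypeEquivRight (fun x => avoid_iff hr x)),
      card_avoid hr]
  refine ⟨by simp [key 0], ?_, key⟩
  intro n hn
  obtain ⟨m, rfl⟩ : ∃ m, n = m + 1 := ⟨n - 1, by omega⟩
  have hsum : ∑ i ∈ Finset.Icc 1 (m + 1),
      (m + 1 - 1).choose (i - 1) * (m + 1 - i).factorial * 0 ^ (m + 1 - i) * p (i - 1)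
      = p m := by
    rw [Finset.sum_eq_single (m + 1)]
    · simp
    · intro i hi hne
      have : 0 < m + 1 - i := by
        simp only [Finset.mem_Icc] at hi; omega
      rw [zero_pow (by omega), mul_zero, zero_mul]
    · intro h
      exact absurd (Finset.mem_Icc.mpr ⟨by omega, le_refl _⟩) h
  rw [hsum]
  simp only [Nat.add_sub_cancel]
  rw [key (m + 1), key m, Finset.prod_Icc_succ_top (Nat.le_add_left 1 m)]
  ring
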